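/- There exists a constant C > 0 such that for every real λ with 1.8 ≤ λ < 2, every nontrivial relator of the group G_{λ,2} = ⟨A_λ, B₂⟩ ≤ SL₂(ℝ) (i.e., every nonempty reduced word in the free group on two generators that evaluates to the identity) admits an exact subword of the form (A_λ B₂⁻¹)^k or (A_λ⁻¹ B₂)^k with k ≥ C/√(2-λ). In particular, the minimal number of syllables in a relator of G_{λ,2} is at least 2C/√(2-λ). -/

import Mathlib

/-- The matrix `A_λ = [[1,λ],[0,1]]` in `SL₂(ℝ)`. -/
def AmatR (lam : ℝ) : Matrix.SpecialLinearGroup (Fin 2) ℝ :=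
  ⟨!![1, lam; 0, 1], by simp [Matrix.det_fin_two_of]⟩

/-- The matrix `B_μ = [[1,0],[μ,1]]` in `SL₂(ℝ)`. -/
def BmatR (mu : ℝ) : Matrix.SpecialLinearGroup (Fin 2) ℝ :=
  ⟨!![1, 0; mu, 1], by simp [Matrix.det_fin_two_of]⟩

/-- A word in the free group on two generators (`true` ↦ `A_λ`, `false` ↦ `B₂`),
presented as its list of syllables, is reduced if consecutive syllables use distinct
generators and all exponents are nonzero. -/
def IsReducedWord (w : List (Bool × ℤ)) : Prop :=
  w.Chain' (fun p q => p.1 ≠ q.1) ∧ ∀ p ∈ w, p.2 ≠ 0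

/-- The evaluation of a word in the group generated by `a` and `b`. -/
def evalW {H : Type*} [Group H] (a b : H) (w : List (Bool × ℤ)) : H :=
  (w.map fun s => (if s.1 then a else b) ^ s.2).prod

namespace S18

/-- mirror map `diag(1,-1)` on vectors -/
def Dv (v : ℝ × ℝ) : ℝ × ℝ := (v.1, -v.2)

def appA (lam : ℝ) (n : ℤ) (v : ℝ × ℝ) : ℝ × ℝ := (v.1 + n * lam * v.2, v.2)
def appB (m : ℤ) (v : ℝ × ℝ) : ℝ × ℝ := (v.1, 2 * m * v.1 + v.2)
def appS (lam : ℝ) (p : Bool × ℤ) (v : ℝ × ℝ) : ℝ × ℝ :=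
  if p.1 then appA lam p.2 v else appB p.2 v
def ev2 (lam : ℝ) (w : List (Bool × ℤ)) (v : ℝ × ℝ) : ℝ × ℝ :=
  w.foldr (appS lam) v

@[simp] lemma Dv_Dv (v : ℝ × ℝ) : Dv (Dv v) = v := by simp [Dv]
lemma Dv_neg (v : ℝ × ℝ) : Dv (-v) = -(Dv v) := by simp [Dv, Prod.ext_iff]
lemma appA_neg (lam : ℝ) (n : ℤ) (v : ℝ × ℝ) : appA lam n (-v) = -(appA lam n v) := by
  simp [appA, Prod.ext_iff]; ring
lemma appB_neg (m : ℤ) (v : ℝ × ℝ) : appB m (-v) = -(appB m v) := by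
  simp [appB, Prod.ext_iff]; ring
lemma appA_Dv (lam : ℝ) (n : ℤ) (v : ℝ × ℝ) : appA lam n (Dv v) = Dv (appA lam (-n) v) := by
  simp only [appA, Dv, Prod.ext_iff]; constructor <;> push_cast <;> ring
lemma appB_Dv (m : ℤ) (v : ℝ × ℝ) : appB m (Dv v) = Dv (appB (-m) v) := by
  simp only [appB, Dv, Prod.ext_iff]; constructor <;> push_cast <;> ring

/-- hypotheses bundle -/
def Hyp (lam e r : ℝ) : Prop :=
  9/5 ≤ lam ∧ lam = 2 - e ∧ 0 < e ∧ e ≤ 1/5 ∧ 0 < r ∧ r ≤ 3/20 ∧ r^2 ≤ e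

noncomputable def sig (lam e r : ℝ) (j : ℕ) : ℝ := -(lam/2) - r + 7*e*j

def QA (lam : ℝ) (v : ℝ × ℝ) : Prop := 0 < v.2 ∧ (lam/2 + 1/5) * v.2 ≤ v.1
def QB (v : ℝ × ℝ) : Prop := 0 < v.2 ∧ 0 < v.1 ∧ 2*v.1 ≤ v.2
def QE1 (lam e r : ℝ) (j : ℕ) (v : ℝ × ℝ) : Prop :=
  0 < v.2 ∧ v.2 ≤ 2*v.1 ∧ (1 - e - 2*r)*v.1 ≤ (lam/2 - r)*v.2 ∧
    v.1 - lam*v.2 ≤ sig lam e r (j+1) * v.2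
def QE2 (lam e r : ℝ) (j : ℕ) (v : ℝ × ℝ) : Prop :=
  0 < v.2 ∧ (1/2 - lam)*v.2 ≤ v.1 ∧ v.1 ≤ sig lam e r j * v.2 ∧ v.1 ≤ (r - lam/2)*v.2

def Pof (Q : ℝ × ℝ → Prop) (v : ℝ × ℝ) : Prop := Q v ∨ Q (-v)

lemma Pof_neg {Q : ℝ × ℝ → Prop} {v : ℝ × ℝ} (h : Pof Q (-v)) : Pof Q v := by
  rcases h with h | h
  · exact Or.inr h
  · exact Or.inl (by simpa using h)

lemma Pof_lift {Q1 Q2 : ℝ × ℝ → Prop} {f : ℝ × ℝ → ℝ × ℝ}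
    (hf : ∀ v, f (-v) = -(f v)) (h : ∀ v, Q1 v → Pof Q2 (f v)) :
    ∀ v, Pof Q1 v → Pof Q2 (f v) := by
  intro v hv
  rcases hv with hv | hv
  · exact h v hv
  · have := h (-v) hv
    rw [hf] at this
    exact Pof_neg this

lemma T1 (H : Hyp lam e r) {n : ℤ} (hn : 1 ≤ n) {v : ℝ × ℝ} (hv : QB v) :
    Pof (QA lam) (appA lam n v) := by
  obtain ⟨h1, h2, h3, h4, h5, h6, h7⟩ := H
  obtain ⟨hy, hx, hxy⟩ := hv
  have hn' : (1:ℝ) ≤ (n:ℝ) := by exact_mod_cast hn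
  left
  refine ⟨hy, ?_⟩
  simp only [appA]
  nlinarith [mul_nonneg (mul_nonneg (by linarith : (0:ℝ) ≤ (n:ℝ) - 1) (by linarith : (0:ℝ) ≤ lam)) hy.le]

lemma T2 (H : Hyp lam e r) {n : ℤ} (hn : n ≤ -1) {v : ℝ × ℝ} (hv : QB v) :
    Pof (QA lam) (Dv (appA lam n v)) := by
  obtain ⟨h1, h2, h3, h4, h5, h6, h7⟩ := H
  obtain ⟨hy, hx, hxy⟩ := hv
  have hn' : (n:ℝ) ≤ -1 := by exact_mod_cast hn
  right
  refine ⟨by simpa [Dv, appA] using hy, ?_⟩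
  simp only [appA, Dv, Prod.fst_neg, Prod.snd_neg, neg_neg]
  nlinarith [mul_nonpos_of_nonpos_of_nonneg (by linarith : (n:ℝ) + 1 ≤ 0) (mul_nonneg (by linarith : (0:ℝ) ≤ lam) hy.le)]

lemma T4 (H : Hyp lam e r) {m : ℤ} (hm : 1 ≤ m) {v : ℝ × ℝ} (hv : QA lam v) :
    Pof QB (appB m v) := by
  obtain ⟨h1, h2, h3, h4, h5, h6, h7⟩ := H
  obtain ⟨hy, hx⟩ := hv
  have hm' : (1:ℝ) ≤ (m:ℝ) := by exact_mod_cast hm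
  have hxpos : 0 < v.1 := by nlinarith
  left
  refine ⟨?_, hxpos, ?_⟩ <;> simp only [appB] <;> nlinarith

lemma T5 (H : Hyp lam e r) {m : ℤ} (hm : m ≤ -2) {v : ℝ × ℝ} (hv : QA lam v) :
    Pof QB (Dv (appB m v)) := by
  obtain ⟨h1, h2, h3, h4, h5, h6, h7⟩ := H
  obtain ⟨hy, hx⟩ := hv
  have hm' : (m:ℝ) ≤ -2 := by exact_mod_cast hm
  have hxpos : 0 < v.1 := by nlinarith
  left
  refine ⟨?_, ?_, ?_⟩ <;> simp only [appB, Dv] <;> nlinarith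

lemma T8 (H : Hyp lam e r) {j : ℕ} {n : ℤ} (hn : 1 ≤ n) {v : ℝ × ℝ}
    (hv : QE1 lam e r j v) : Pof (QA lam) (appA lam n v) := by
  obtain ⟨h1, h2, h3, h4, h5, h6, h7⟩ := H
  obtain ⟨hy, hx, hM, hs⟩ := hv
  have hn' : (1:ℝ) ≤ (n:ℝ) := by exact_mod_cast hn
  left
  refine ⟨hy, ?_⟩
  simp only [appA]
  nlinarith [mul_nonneg (mul_nonneg (by linarith : (0:ℝ) ≤ (n:ℝ) - 1) (by linarith : (0:ℝ) ≤ lam)) hy.le]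

lemma T9 (H : Hyp lam e r) {j : ℕ} {n : ℤ} (hn : n ≤ -2) {v : ℝ × ℝ}
    (hv : QE1 lam e r j v) : Pof (QA lam) (Dv (appA lam n v)) := by
  obtain ⟨h1, h2, h3, h4, h5, h6, h7⟩ := H
  obtain ⟨hy, hx, hM, hs⟩ := hv
  have hn' : (n:ℝ) ≤ -2 := by exact_mod_cast hn
  -- x ≤ (3/2) y
  have hx32 : v.1 ≤ (3/2) * v.2 := by nlinarith
  right
  refine ⟨by simpa [Dv, appA] using hy, ?_⟩
  simp only [appA, Dv, Prod.fst_neg, Prod.snd_neg, neg_neg]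
  nlinarith [mul_nonpos_of_nonpos_of_nonneg (by linarith : (n:ℝ) + 2 ≤ 0) (mul_nonneg (by linarith : (0:ℝ) ≤ lam) hy.le)]

lemma T10 (H : Hyp lam e r) {j : ℕ} {m : ℤ} (hm : m ≤ -1) {v : ℝ × ℝ}
    (hv : QE2 lam e r j v) : Pof QB (Dv (appB m v)) := by
  obtain ⟨h1, h2, h3, h4, h5, h6, h7⟩ := H
  obtain ⟨hy, hlo, hsig, hcap⟩ := hv
  have hm' : (m:ℝ) ≤ -1 := by exact_mod_cast hm
  have hxneg : v.1 < 0 := by nlinarith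
  right
  refine ⟨?_, ?_, ?_⟩ <;>
    simp only [appB, Dv, Prod.fst_neg, Prod.snd_neg, neg_neg] <;> nlinarith

lemma T11 (H : Hyp lam e r) {j : ℕ} {m : ℤ} (hm : 2 ≤ m) {v : ℝ × ℝ}
    (hv : QE2 lam e r j v) : Pof QB (appB m v) := by
  obtain ⟨h1, h2, h3, h4, h5, h6, h7⟩ := H
  obtain ⟨hy, hlo, hsig, hcap⟩ := hv
  have hm' : (2:ℝ) ≤ (m:ℝ) := by exact_mod_cast hm
  have hxneg : v.1 < 0 := by nlinarith
  right
  refine ⟨?_, ?_, ?_⟩ <;>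
    simp only [appB, Prod.fst_neg, Prod.snd_neg, neg_neg] <;> nlinarith

lemma TB1 (H : Hyp lam e r) {n : ℤ} (hn : 1 ≤ n) :
    Pof (QA lam) (appA lam n ((0:ℝ), (1:ℝ))) := by
  obtain ⟨h1, h2, h3, h4, h5, h6, h7⟩ := H
  have hn' : (1:ℝ) ≤ (n:ℝ) := by exact_mod_cast hn
  left
  constructor <;> simp [appA] <;> nlinarith

lemma TB2 (H : Hyp lam e r) {n : ℤ} (hn : n ≤ -1) :
    Pof (QA lam) (Dv (appA lam n ((0:ℝ), (1:ℝ)))) := by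
  obtain ⟨h1, h2, h3, h4, h5, h6, h7⟩ := H
  have hn' : (n:ℝ) ≤ -1 := by exact_mod_cast hn
  right
  constructor <;> simp [appA, Dv] <;> nlinarith

lemma TB3 {m : ℤ} (hm : 1 ≤ m) : Pof QB (appB m ((1:ℝ), (0:ℝ))) := by
  have hm' : (1:ℝ) ≤ (m:ℝ) := by exact_mod_cast hm
  left
  refine ⟨?_, ?_, ?_⟩ <;> simp [appB] <;> nlinarith

lemma TB4 {m : ℤ} (hm : m ≤ -1) : Pof QB (Dv (appB m ((1:ℝ), (0:ℝ)))) := by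
  have hm' : (m:ℝ) ≤ -1 := by exact_mod_cast hm
  left
  refine ⟨?_, ?_, ?_⟩ <;> simp [appB, Dv] <;> nlinarith

lemma sig_succ (j : ℕ) : sig lam e r (j+1) = sig lam e r j + 7*e := by
  simp only [sig]; push_cast; ring

lemma sig_ge_one (he : 0 < e) (j : ℕ) : sig lam e r 1 ≤ sig lam e r (j+1) := by
  simp only [sig]; push_cast
  have : (1:ℝ) ≤ (j:ℝ) + 1 := by linarith [Nat.cast_nonneg (α:=ℝ) j]
  nlinarith

lemma T7 (H : Hyp lam e r) {j : ℕ} {v : ℝ × ℝ}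
    (hcap : 7*e*((j:ℝ)+1) ≤ 2*r) (hv : QE1 lam e r j v) :
    Pof (QE2 lam e r (j+1)) (appA lam (-1) v) := by
  obtain ⟨h1, h2, h3, h4, h5, h6, h7⟩ := H
  obtain ⟨hy, hx, hM, hs⟩ := hv
  have hsig : sig lam e r (j+1) ≤ r - lam/2 := by
    simp only [sig]; push_cast; linarith
  left
  refine ⟨hy, ?_, ?_, ?_⟩ <;> simp only [appA, Int.cast_neg, Int.cast_one]
  · nlinarith
  · calc v.1 + -1 * lam * v.2 = v.1 - lam * v.2 := by ring
      _ ≤ sig lam e r (j+1) * v.2 := hs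
  · calc v.1 + -1 * lam * v.2 = v.1 - lam * v.2 := by ring
      _ ≤ sig lam e r (j+1) * v.2 := hs
      _ ≤ (r - lam/2) * v.2 := by nlinarith

lemma T6 (H : Hyp lam e r) {v : ℝ × ℝ} (hv : QA lam v) :
    Pof (QE1 lam e r 0) (Dv (appB (-1) v)) := by
  obtain ⟨h1, h2, h3, h4, h5, h6, h7⟩ := H
  subst h2
  obtain ⟨hy, hx⟩ := hv
  left
  simp only [QE1, appB, Dv, sig, Int.cast_neg, Int.cast_one, Nat.cast_one]
  refine ⟨by nlinarith, by nlinarith, by nlinarith, ?_⟩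
  have key : (1:ℝ) + 13*e - 2*r > 0 := by nlinarith
  nlinarith [sq_nonneg (r - 7/73), mul_nonneg h3.le h5.le, mul_pos h3 h3,
    mul_nonneg (sub_nonneg.2 hx) (by linarith : (0:ℝ) ≤ 1 + 13*e/2 - r),
    mul_nonneg h3.le hy.le, mul_nonneg h5.le hy.le,
    mul_nonneg (mul_nonneg h3.le h3.le) hy.le,
    mul_nonneg (mul_nonneg h3.le h5.le) hy.le,
    mul_nonneg (mul_nonneg h5.le h5.le) hy.le]

set_option maxHeartbeats 1000000 in
lemma T12 (H : Hyp lam e r) {j : ℕ} {v : ℝ × ℝ} (hv : QE2 lam e r j v) :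
    Pof (QE1 lam e r j) (appB 1 v) := by
  obtain ⟨h1, h2, h3, h4, h5, h6, h7⟩ := H
  obtain ⟨hy, hlo, hsg, hcap⟩ := hv
  subst h2
  set x := v.1 with hxdef
  set y := v.2 with hydef
  set S := sig (2-e) e r (j+1) with hSdef
  have hsig : S = sig (2-e) e r j + 7*e := sig_succ j
  have hS1 : -((2-e)/2) - r + 7*e ≤ S := by
    rw [hSdef]; simp only [sig]; push_cast
    nlinarith [Nat.cast_nonneg (α:=ℝ) j]
  right
  simp only [QE1, appB, Prod.fst_neg, Prod.snd_neg, Int.cast_one]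
  have hyneg : 2*x + y ≤ -((1 - e - 2*r))*y := by nlinarith
  have hyneg2 : 2*x + y ≤ 0 := by nlinarith
  refine ⟨by nlinarith, by nlinarith, by nlinarith, ?_⟩
  have hgoal : -x - (2-e) * -(2*1*x + y) - S * -(2*1*x+y) ≤ 0 → -x - (2-e) * -(2*1*x + y) ≤ S * -(2*1*x+y) := by intro h; linarith
  apply hgoal
  rcases le_or_gt x (-((2-e)/2 + r) * y) with hbr | hbr
  · -- far branch : replace S by its lower bound S1 (coefficient 2x+y ≤ 0)
    have hrepl : -x - (2-e) * -(2*1*x + y) - S * -(2*1*x+y)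
        ≤ -x - (2-e) * -(2*1*x + y) - (-((2-e)/2) - r + 7*e) * -(2*1*x+y) := by nlinarith
    have hco : (0:ℝ) < 1 + 13*e - 2*r := by nlinarith
    have hprod : (x + ((2-e)/2 + r) * y) * (1 + 13*e - 2*r) ≤ 0 :=
      mul_nonpos_of_nonpos_of_nonneg (by linarith) (by linarith)
    nlinarith [hprod, mul_nonneg (mul_nonneg h3.le h5.le) hy.le,
      mul_nonneg (mul_nonneg h3.le h3.le) hy.le,
      mul_nonneg (mul_nonneg h5.le h5.le) hy.le, mul_nonneg h3.le hy.le]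
  · -- window branch
    have hcapy : x + (2-e)/2 * y ≤ r * y := by linarith
    have hwin : -(r * y) ≤ x + (2-e)/2 * y := by linarith
    have hsq : (x + (2-e)/2 * y)^2 ≤ e * y^2 := by nlinarith [sq_nonneg y]
    have h2xy : y/2 ≤ -(2*x + y) := by nlinarith
    have h7e : 7*e*y ≤ S * y - x := by nlinarith
    have hprod2 : (y/2) * (7*e*y) ≤ (-(2*x + y)) * (S * y - x) :=
      mul_le_mul h2xy h7e (by positivity) (by linarith)
    have hGy : (-x - (2-e) * -(2*1*x + y) - S * -(2*1*x+y)) * y ≤ 0 := by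
      nlinarith [hsq, hprod2, mul_nonneg (mul_nonneg h3.le h3.le) (sq_nonneg y), mul_pos hy hy]
    have := le_of_mul_le_mul_right (by linarith : (-x - (2-e) * -(2*1*x + y) - S * -(2*1*x+y)) * y ≤ 0 * y) hy
    linarith


-- ## P-level (projective) transition lemmas

lemma P_T1 (H : Hyp lam e r) {n : ℤ} (hn : 1 ≤ n) :
    ∀ v, Pof QB v → Pof (QA lam) (appA lam n v) :=
  Pof_lift (appA_neg lam n) (fun _ h => T1 H hn h)
lemma P_T2 (H : Hyp lam e r) {n : ℤ} (hn : n ≤ -1) :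
    ∀ v, Pof QB v → Pof (QA lam) (Dv (appA lam n v)) :=
  Pof_lift (fun u => by rw [appA_neg, Dv_neg]) (fun _ h => T2 H hn h)
lemma P_T4 (H : Hyp lam e r) {m : ℤ} (hm : 1 ≤ m) :
    ∀ v, Pof (QA lam) v → Pof QB (appB m v) :=
  Pof_lift (appB_neg m) (fun _ h => T4 H hm h)
lemma P_T5 (H : Hyp lam e r) {m : ℤ} (hm : m ≤ -2) :
    ∀ v, Pof (QA lam) v → Pof QB (Dv (appB m v)) :=
  Pof_lift (fun u => by rw [appB_neg, Dv_neg]) (fun _ h => T5 H hm h)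
lemma P_T6 (H : Hyp lam e r) :
    ∀ v, Pof (QA lam) v → Pof (QE1 lam e r 0) (Dv (appB (-1) v)) :=
  Pof_lift (fun u => by rw [appB_neg, Dv_neg]) (fun _ h => T6 H h)
lemma P_T7 (H : Hyp lam e r) {j : ℕ} (hcap : 7*e*((j:ℝ)+1) ≤ 2*r) :
    ∀ v, Pof (QE1 lam e r j) v → Pof (QE2 lam e r (j+1)) (appA lam (-1) v) :=
  Pof_lift (appA_neg lam (-1)) (fun _ h => T7 H hcap h)
lemma P_T8 (H : Hyp lam e r) {j : ℕ} {n : ℤ} (hn : 1 ≤ n) :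
    ∀ v, Pof (QE1 lam e r j) v → Pof (QA lam) (appA lam n v) :=
  Pof_lift (appA_neg lam n) (fun _ h => T8 H hn h)
lemma P_T9 (H : Hyp lam e r) {j : ℕ} {n : ℤ} (hn : n ≤ -2) :
    ∀ v, Pof (QE1 lam e r j) v → Pof (QA lam) (Dv (appA lam n v)) :=
  Pof_lift (fun u => by rw [appA_neg, Dv_neg]) (fun _ h => T9 H hn h)
lemma P_T10 (H : Hyp lam e r) {j : ℕ} {m : ℤ} (hm : m ≤ -1) :
    ∀ v, Pof (QE2 lam e r j) v → Pof QB (Dv (appB m v)) :=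
  Pof_lift (fun u => by rw [appB_neg, Dv_neg]) (fun _ h => T10 H hm h)
lemma P_T11 (H : Hyp lam e r) {j : ℕ} {m : ℤ} (hm : 2 ≤ m) :
    ∀ v, Pof (QE2 lam e r j) v → Pof QB (appB m v) :=
  Pof_lift (appB_neg m) (fun _ h => T11 H hm h)
lemma P_T12 (H : Hyp lam e r) {j : ℕ} :
    ∀ v, Pof (QE2 lam e r j) v → Pof (QE1 lam e r j) (appB 1 v) :=
  Pof_lift (appB_neg 1) (fun _ h => T12 H h)

-- ## the state machine

inductive St where
  | aP | aN | bP | bN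
  | e1N (j : ℕ) | e1P (j : ℕ) | e2N (j : ℕ) | e2P (j : ℕ)
deriving DecidableEq

def letterSt : St → Bool
  | .aP => true
  | .aN => true
  | .e2N _ => true
  | .e2P _ => true
  | _ => false

def baseSt (p : Bool × ℤ) : St :=
  if p.1 then (if 0 < p.2 then .aP else .aN) else (if 0 < p.2 then .bP else .bN)

def delta (p : Bool × ℤ) (s : St) : St :=
  match s with
  | .bP => if 0 < p.2 then .aP else .aN
  | .bN => if 0 < p.2 then .aP else .aN
  | .e1N j => if p.2 = -1 then .e2N (j+1) else if 0 < p.2 then .aP else .aN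
  | .e1P j => if p.2 = 1 then .e2P (j+1) else if 0 < p.2 then .aP else .aN
  | .aP => if p.2 = -1 then .e1P 0 else if 0 < p.2 then .bP else .bN
  | .aN => if p.2 = 1 then .e1N 0 else if 0 < p.2 then .bP else .bN
  | .e2N j => if p.2 = 1 then .e1N j else if 0 < p.2 then .bP else .bN
  | .e2P j => if p.2 = -1 then .e1P j else if 0 < p.2 then .bP else .bN

def stF (p : Bool × ℤ) : List (Bool × ℤ) → St
  | [] => baseSt p
  | q :: t => delta p (stF q t)

def RegSt (lam e r : ℝ) : St → (ℝ × ℝ) → Prop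
  | .aP, v => Pof (QA lam) v
  | .aN, v => Pof (QA lam) (Dv v)
  | .bP, v => Pof QB v
  | .bN, v => Pof QB (Dv v)
  | .e1N j, v => Pof (QE1 lam e r j) v
  | .e1P j, v => Pof (QE1 lam e r j) (Dv v)
  | .e2N j, v => Pof (QE2 lam e r j) v
  | .e2P j, v => Pof (QE2 lam e r j) (Dv v)

lemma letter_delta (p : Bool × ℤ) (s : St) : letterSt (delta p s) = !letterSt s := by
  cases s <;> simp only [delta, letterSt] <;> split_ifs <;> rfl

lemma stepReg (H : Hyp lam e r) {p : Bool × ℤ} {s : St} (hl : p.1 = !letterSt s)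
    (hn : p.2 ≠ 0)
    (hcap : ∀ j : ℕ, (delta p s = .e2N j ∨ delta p s = .e2P j) → 7*e*(j:ℝ) ≤ 2*r)
    {v : ℝ × ℝ} (hv : RegSt lam e r s v) :
    RegSt lam e r (delta p s) (appS lam p v) := by
  obtain ⟨b, n⟩ := p
  simp only at hl hn
  cases s
  case aP =>
    simp only [letterSt, Bool.not_true] at hl; subst hl
    rw [show appS lam (false, n) v = appB n v from rfl]
    simp only [delta]
    rcases eq_or_ne n (-1) with h1 | h1
    · subst h1
      rw [if_pos rfl]
      exact P_T6 H v hv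
    · rcases lt_or_ge 0 n with h2 | h2
      · rw [if_neg h1, if_pos h2]
        exact P_T4 H (by omega) v hv
      · rw [if_neg h1, if_neg (not_lt.mpr h2)]
        exact P_T5 H (by omega) v hv
  case aN =>
    simp only [letterSt, Bool.not_true] at hl; subst hl
    rw [show appS lam (false, n) v = appB n v from rfl]
    simp only [delta]
    have hv' : Pof (QA lam) (Dv v) := hv
    rcases eq_or_ne n 1 with h1 | h1
    · subst h1
      rw [if_pos rfl]
      have := P_T6 H (Dv v) hv'
      rwa [appB_Dv, Dv_Dv, neg_neg] at this
    · rcases lt_or_ge 0 n with h2 | h2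
      · rw [if_neg h1, if_pos h2]
        have := P_T5 H (m := -n) (by omega) (Dv v) hv'
        rwa [appB_Dv, Dv_Dv, neg_neg] at this
      · rw [if_neg h1, if_neg (not_lt.mpr h2)]
        have := P_T4 H (m := -n) (by omega) (Dv v) hv'
        rwa [appB_Dv, neg_neg] at this
  case bP =>
    simp only [letterSt, Bool.not_false] at hl; subst hl
    rw [show appS lam (true, n) v = appA lam n v from rfl]
    simp only [delta]
    rcases lt_or_ge 0 n with h2 | h2
    · rw [if_pos h2]; exact P_T1 H (by omega) v hv
    · rw [if_neg (not_lt.mpr h2)]; exact P_T2 H (by omega) v hv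
  case bN =>
    simp only [letterSt, Bool.not_false] at hl; subst hl
    rw [show appS lam (true, n) v = appA lam n v from rfl]
    simp only [delta]
    have hv' : Pof QB (Dv v) := hv
    rcases lt_or_ge 0 n with h2 | h2
    · rw [if_pos h2]
      have := P_T2 H (n := -n) (by omega) (Dv v) hv'
      rwa [appA_Dv, Dv_Dv, neg_neg] at this
    · rw [if_neg (not_lt.mpr h2)]
      have := P_T1 H (n := -n) (by omega) (Dv v) hv'
      rwa [appA_Dv, neg_neg] at this
  case e1N j =>
    simp only [letterSt, Bool.not_false] at hl; subst hl
    rw [show appS lam (true, n) v = appA lam n v from rfl]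
    simp only [delta]
    rcases eq_or_ne n (-1) with h1 | h1
    · subst h1
      rw [if_pos rfl]
      have hc : 7*e*((j:ℝ)+1) ≤ 2*r := by
        have := hcap (j+1) (Or.inl (by simp [delta]))
        push_cast at this; linarith
      exact P_T7 H hc v hv
    · rcases lt_or_ge 0 n with h2 | h2
      · rw [if_neg h1, if_pos h2]; exact P_T8 H (by omega) v hv
      · rw [if_neg h1, if_neg (not_lt.mpr h2)]; exact P_T9 H (by omega) v hv
  case e1P j =>
    simp only [letterSt, Bool.not_false] at hl; subst hl
    rw [show appS lam (true, n) v = appA lam n v from rfl]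
    simp only [delta]
    have hv' : Pof (QE1 lam e r j) (Dv v) := hv
    rcases eq_or_ne n 1 with h1 | h1
    · subst h1
      rw [if_pos rfl]
      have hc : 7*e*((j:ℝ)+1) ≤ 2*r := by
        have := hcap (j+1) (Or.inr (by simp [delta]))
        push_cast at this; linarith
      have := P_T7 H hc (Dv v) hv'
      rwa [appA_Dv, neg_neg] at this
    · rcases lt_or_ge 0 n with h2 | h2
      · rw [if_neg h1, if_pos h2]
        have := P_T9 H (n := -n) (by omega) (Dv v) hv'
        rwa [appA_Dv, Dv_Dv, neg_neg] at this
      · rw [if_neg h1, if_neg (not_lt.mpr h2)]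
        have := P_T8 H (n := -n) (by omega) (Dv v) hv'
        rwa [appA_Dv, neg_neg] at this
  case e2N j =>
    simp only [letterSt, Bool.not_true] at hl; subst hl
    rw [show appS lam (false, n) v = appB n v from rfl]
    simp only [delta]
    rcases eq_or_ne n 1 with h1 | h1
    · subst h1
      rw [if_pos rfl]
      exact P_T12 H v hv
    · rcases lt_or_ge 0 n with h2 | h2
      · rw [if_neg h1, if_pos h2]; exact P_T11 H (by omega) v hv
      · rw [if_neg h1, if_neg (not_lt.mpr h2)]; exact P_T10 H (by omega) v hv
  case e2P j =>
    simp only [letterSt, Bool.not_true] at hl; subst hl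
    rw [show appS lam (false, n) v = appB n v from rfl]
    simp only [delta]
    have hv' : Pof (QE2 lam e r j) (Dv v) := hv
    rcases eq_or_ne n (-1) with h1 | h1
    · subst h1
      rw [if_pos rfl]
      have := P_T12 H (Dv v) hv'
      rwa [appB_Dv] at this
    · rcases lt_or_ge 0 n with h2 | h2
      · rw [if_neg h1, if_pos h2]
        have := P_T10 H (m := -n) (by omega) (Dv v) hv'
        rwa [appB_Dv, Dv_Dv, neg_neg] at this
      · rw [if_neg h1, if_neg (not_lt.mpr h2)]
        have := P_T11 H (m := -n) (by omega) (Dv v) hv'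
        rwa [appB_Dv, neg_neg] at this


-- ## words, states, patterns

def patN (k : ℕ) : List (Bool × ℤ) := (List.replicate k [((true:Bool), (-1:ℤ)), (false, 1)]).flatten
def patP (k : ℕ) : List (Bool × ℤ) := (List.replicate k [((true:Bool), (1:ℤ)), (false, -1)]).flatten

lemma patN_succ (j : ℕ) : patN (j+1) = (true,-1) :: (false,1) :: patN j := by
  simp [patN, List.replicate_succ]
lemma patP_succ (j : ℕ) : patP (j+1) = (true,1) :: (false,-1) :: patP j := by
  simp [patP, List.replicate_succ]

lemma patN_mono {k j : ℕ} (h : k ≤ j) : patN k <+: patN j := by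
  refine ⟨patN (j - k), ?_⟩
  rw [patN, patN, ← List.flatten_append, ← List.replicate_add]
  congr 2
  omega

lemma patP_mono {k j : ℕ} (h : k ≤ j) : patP k <+: patP j := by
  refine ⟨patP (j - k), ?_⟩
  rw [patP, patP, ← List.flatten_append, ← List.replicate_add]
  congr 2
  omega

lemma patN_length (k : ℕ) : (patN k).length = 2*k := by
  simp [patN, Function.comp]; omega
lemma patP_length (k : ℕ) : (patP k).length = 2*k := by
  simp [patP, Function.comp]; omega

lemma letter_stF : ∀ (w : List (Bool × ℤ)) (p : Bool × ℤ),
    (p :: w).Chain' (fun a b => a.1 ≠ b.1) → letterSt (stF p w) = p.1 := by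
  intro w
  induction w with
  | nil =>
    intro p _
    obtain ⟨b, n⟩ := p
    cases b
    · show letterSt (baseSt (false, n)) = false
      simp only [baseSt, Bool.false_eq_true, if_false]
      split_ifs <;> rfl
    · show letterSt (baseSt (true, n)) = true
      simp only [baseSt, if_true]
      split_ifs <;> rfl
  | cons q t ih =>
    intro p hch
    have hpq : p.1 ≠ q.1 := (List.isChain_cons_cons.mp hch).1
    have hq := ih q (List.isChain_cons_cons.mp hch).2
    show letterSt (delta p (stF q t)) = p.1
    rw [letter_delta, hq]
    cases hp : p.1 <;> cases hq2 : q.1 <;> simp_all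

-- inversion lemmas for `delta`

lemma delta_eq_e1N {p : Bool × ℤ} {s : St} {j : ℕ} (h : delta p s = .e1N j) :
    (s = .aN ∧ p.2 = 1 ∧ j = 0) ∨ (s = .e2N j ∧ p.2 = 1) := by
  cases s <;> simp only [delta] at h <;> split_ifs at h with h1 h2 <;> simp_all

lemma delta_eq_e2N {p : Bool × ℤ} {s : St} {j : ℕ} (h : delta p s = .e2N j) :
    ∃ j', s = .e1N j' ∧ p.2 = -1 ∧ j = j' + 1 := by
  cases s <;> simp only [delta] at h <;> split_ifs at h with h1 h2 <;> simp_all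

lemma delta_eq_e1P {p : Bool × ℤ} {s : St} {j : ℕ} (h : delta p s = .e1P j) :
    (s = .aP ∧ p.2 = -1 ∧ j = 0) ∨ (s = .e2P j ∧ p.2 = -1) := by
  cases s <;> simp only [delta] at h <;> split_ifs at h with h1 h2 <;> simp_all

lemma delta_eq_e2P {p : Bool × ℤ} {s : St} {j : ℕ} (h : delta p s = .e2P j) :
    ∃ j', s = .e1P j' ∧ p.2 = 1 ∧ j = j' + 1 := by
  cases s <;> simp only [delta] at h <;> split_ifs at h with h1 h2 <;> simp_all

lemma stF_pat : ∀ (w : List (Bool × ℤ)) (p : Bool × ℤ),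
    (p :: w).Chain' (fun a b => a.1 ≠ b.1) →
    (∀ j, stF p w = .e1N j → ((false,(1:ℤ)) :: patN j) <+: (p :: w)) ∧
    (∀ j, stF p w = .e2N j → patN j <+: (p :: w)) ∧
    (∀ j, stF p w = .e1P j → ((false,(-1:ℤ)) :: patP j) <+: (p :: w)) ∧
    (∀ j, stF p w = .e2P j → patP j <+: (p :: w)) := by
  intro w
  induction w with
  | nil =>
    intro p _
    refine ⟨?_, ?_, ?_, ?_⟩ <;> intro j h <;> exfalso <;> revert h <;>
      simp only [stF, baseSt] <;> split_ifs <;> simp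
  | cons q t ih =>
    intro p hch
    have hpq : p.1 ≠ q.1 := (List.isChain_cons_cons.mp hch).1
    have hcht : (q :: t).Chain' (fun a b => a.1 ≠ b.1) := (List.isChain_cons_cons.mp hch).2
    have hlq := letter_stF t q hcht
    obtain ⟨ih1, ih2, ih3, ih4⟩ := ih q hcht
    have hp1 : p.1 = !(letterSt (stF q t)) := by
      rw [hlq]; cases hb : p.1 <;> cases hbq : q.1 <;> simp_all
    have hst : stF p (q :: t) = delta p (stF q t) := rfl
    refine ⟨?_, ?_, ?_, ?_⟩ <;> intro j h <;> rw [hst] at h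
    · rcases delta_eq_e1N h with ⟨hs, hp2, hj⟩ | ⟨hs, hp2⟩
      · subst hj
        have hpfalse : p.1 = false := by rw [hp1, hs]; rfl
        have : p = (false, 1) := Prod.ext hpfalse hp2
        subst this
        simp [patN]
      · have hpfalse : p.1 = false := by rw [hp1, hs]; rfl
        have : p = (false, 1) := Prod.ext hpfalse hp2
        subst this
        exact List.cons_prefix_cons.mpr ⟨rfl, ih2 j hs⟩
    · rcases delta_eq_e2N h with ⟨j', hs, hp2, hj⟩
      subst hj
      have hptrue : p.1 = true := by rw [hp1, hs]; rfl
      have : p = (true, -1) := Prod.ext hptrue hp2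
      subst this
      rw [patN_succ]
      exact List.cons_prefix_cons.mpr ⟨rfl, ih1 j' hs⟩
    · rcases delta_eq_e1P h with ⟨hs, hp2, hj⟩ | ⟨hs, hp2⟩
      · subst hj
        have hpfalse : p.1 = false := by rw [hp1, hs]; rfl
        have : p = (false, -1) := Prod.ext hpfalse hp2
        subst this
        simp [patP]
      · have hpfalse : p.1 = false := by rw [hp1, hs]; rfl
        have : p = (false, -1) := Prod.ext hpfalse hp2
        subst this
        exact List.cons_prefix_cons.mpr ⟨rfl, ih4 j hs⟩
    · rcases delta_eq_e2P h with ⟨j', hs, hp2, hj⟩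
      subst hj
      have hptrue : p.1 = true := by rw [hp1, hs]; rfl
      have : p = (true, 1) := Prod.ext hptrue hp2
      subst this
      rw [patP_succ]
      exact List.cons_prefix_cons.mpr ⟨rfl, ih3 j' hs⟩

-- ## the main invariant

def v0 (b : Bool) : ℝ × ℝ := if b then (0,1) else (1,0)

def lastSyl (p : Bool × ℤ) : List (Bool × ℤ) → (Bool × ℤ)
  | [] => p
  | q :: t => lastSyl q t

lemma INV (H : Hyp lam e r) : ∀ (w : List (Bool × ℤ)) (p : Bool × ℤ),
    IsReducedWord (p :: w) →
    (∀ (q : Bool × ℤ) (t : List (Bool × ℤ)) (j : ℕ), (q :: t) <:+ (p :: w) →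
      (stF q t = .e2N j ∨ stF q t = .e2P j) → 7*e*(j:ℝ) ≤ 2*r) →
    RegSt lam e r (stF p w) (ev2 lam (p :: w) (v0 (lastSyl p w).1)) := by
  intro w
  induction w with
  | nil =>
    intro p hred _
    have hn : p.2 ≠ 0 := hred.2 p (by simp)
    obtain ⟨b, n⟩ := p
    simp only at hn
    show RegSt lam e r (baseSt (b, n)) (appS lam (b, n) (v0 b))
    cases b
    · rcases lt_or_ge 0 n with h2 | h2
      · rw [show baseSt (false, n) = (if 0 < n then St.bP else St.bN) from rfl, if_pos h2]
        exact TB3 (by omega)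
      · rw [show baseSt (false, n) = (if 0 < n then St.bP else St.bN) from rfl,
          if_neg (by omega)]
        exact TB4 (by omega)
    · rcases lt_or_ge 0 n with h2 | h2
      · rw [show baseSt (true, n) = (if 0 < n then St.aP else St.aN) from rfl, if_pos h2]
        exact TB1 H (by omega)
      · rw [show baseSt (true, n) = (if 0 < n then St.aP else St.aN) from rfl,
          if_neg (by omega)]
        exact TB2 H (by omega)
  | cons q t ih =>
    intro p hred hcap
    have hch := hred.1
    have hpq : p.1 ≠ q.1 := (List.isChain_cons_cons.mp hch).1
    have hredt : IsReducedWord (q :: t) :=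
      ⟨(List.isChain_cons_cons.mp hch).2, fun x hx => hred.2 x (by simp [hx])⟩
    have hcapt : ∀ (q' : Bool × ℤ) (t' : List (Bool × ℤ)) (j : ℕ), (q' :: t') <:+ (q :: t) →
        (stF q' t' = .e2N j ∨ stF q' t' = .e2P j) → 7*e*(j:ℝ) ≤ 2*r := by
      intro q' t' j hsuf hst
      exact hcap q' t' j (hsuf.trans (List.suffix_cons p (q :: t))) hst
    have IH := ih q hredt hcapt
    show RegSt lam e r (delta p (stF q t)) (appS lam p (ev2 lam (q :: t) (v0 (lastSyl q t).1)))
    apply stepReg H ?_ (hred.2 p (by simp)) ?_ IH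
    · rw [letter_stF t q hredt.1]
      revert hpq
      cases p.1 <;> cases q.1 <;> simp
    · intro j hst
      exact hcap p (q :: t) j (List.suffix_refl _) hst

lemma v0_notin (H : Hyp lam e r) (s : St) (b : Bool) : ¬ RegSt lam e r s (v0 b) := by
  obtain ⟨h1, h2, h3, h4, h5, h6, h7⟩ := H
  have hv0f : v0 false = ((1:ℝ), (0:ℝ)) := rfl
  have hv0t : v0 true = ((0:ℝ), (1:ℝ)) := rfl
  cases b
  · rw [hv0f]
    cases s <;> intro hreg <;> rcases hreg with h | h <;> have h0 := h.1 <;>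
      norm_num [Dv] at h0
  · rw [hv0t]
    cases s <;> intro hreg
    case aP =>
      rcases hreg with h | h
      · have := h.2; norm_num at this; linarith
      · have := h.1; norm_num at this
    case aN =>
      rcases hreg with h | h
      · have := h.1; norm_num [Dv] at this
      · have := h.2; norm_num [Dv] at this <;> linarith
    case bP =>
      rcases hreg with h | h
      · have := h.2.1; norm_num at this
      · have := h.1; norm_num at this
    case bN =>
      rcases hreg with h | h
      · have := h.1; norm_num [Dv] at this
      · have := h.2.1; norm_num [Dv] at this
    case e1N j =>
      rcases hreg with h | h
      · have := h.2.1; norm_num at this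
      · have := h.1; norm_num at this
    case e1P j =>
      rcases hreg with h | h
      · have := h.1; norm_num [Dv] at this
      · have := h.2.1; norm_num [Dv] at this
    case e2N j =>
      rcases hreg with h | h
      · have := h.2.2.2; norm_num at this <;> linarith
      · have := h.1; norm_num at this
    case e2P j =>
      rcases hreg with h | h
      · have := h.1; norm_num [Dv] at this
      · have := h.2.2.2; norm_num [Dv] at this <;> linarith


-- ## bridge to SL₂(ℝ)

lemma AmatR_mul (a b : ℝ) : AmatR a * AmatR b = AmatR (a + b) := by
  refine Subtype.ext ?_
  rw [Matrix.SpecialLinearGroup.coe_mul]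
  show (!![1, a; 0, 1] : Matrix (Fin 2) (Fin 2) ℝ) * !![1, b; 0, 1] = !![1, a+b; 0, 1]
  rw [Matrix.mul_fin_two]
  norm_num
  rw [add_comm]

lemma BmatR_mul (a b : ℝ) : BmatR a * BmatR b = BmatR (a + b) := by
  refine Subtype.ext ?_
  rw [Matrix.SpecialLinearGroup.coe_mul]
  show (!![1, 0; a, 1] : Matrix (Fin 2) (Fin 2) ℝ) * !![1, 0; b, 1] = !![1, 0; a+b, 1]
  rw [Matrix.mul_fin_two]
  norm_num

lemma AmatR_zero : AmatR 0 = 1 := by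
  refine Subtype.ext ?_
  rw [Matrix.SpecialLinearGroup.coe_one, Matrix.one_fin_two]
  rfl

lemma BmatR_zero : BmatR 0 = 1 := by
  refine Subtype.ext ?_
  rw [Matrix.SpecialLinearGroup.coe_one, Matrix.one_fin_two]
  rfl

lemma AmatR_inv (a : ℝ) : (AmatR a)⁻¹ = AmatR (-a) :=
  inv_eq_of_mul_eq_one_right (by rw [AmatR_mul]; simp [AmatR_zero])

lemma BmatR_inv (a : ℝ) : (BmatR a)⁻¹ = BmatR (-a) :=
  inv_eq_of_mul_eq_one_right (by rw [BmatR_mul]; simp [BmatR_zero])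

lemma AmatR_zpow (a : ℝ) (n : ℤ) : AmatR a ^ n = AmatR (n * a) := by
  induction n using Int.induction_on with
  | zero => simpa using AmatR_zero.symm
  | succ k ih =>
    rw [zpow_add_one, ih, AmatR_mul]
    congr 1
    push_cast
    ring
  | pred k ih =>
    rw [zpow_sub_one, ih, AmatR_inv, AmatR_mul]
    congr 1
    push_cast
    ring

lemma BmatR_zpow (a : ℝ) (n : ℤ) : BmatR a ^ n = BmatR (n * a) := by
  induction n using Int.induction_on with
  | zero => simpa using BmatR_zero.symm
  | succ k ih =>
    rw [zpow_add_one, ih, BmatR_mul]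
    congr 1
    push_cast
    ring
  | pred k ih =>
    rw [zpow_sub_one, ih, BmatR_inv, BmatR_mul]
    congr 1
    push_cast
    ring

lemma A_mulVec (a x y : ℝ) :
    (↑(AmatR a) : Matrix (Fin 2) (Fin 2) ℝ).mulVec ![x, y] = ![x + a*y, y] := by
  funext i
  fin_cases i <;>
    simp [AmatR, Matrix.mulVec, dotProduct, Fin.sum_univ_two]

lemma B_mulVec (a x y : ℝ) :
    (↑(BmatR a) : Matrix (Fin 2) (Fin 2) ℝ).mulVec ![x, y] = ![x, a*x + y] := by
  funext i
  fin_cases i <;>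
    simp [BmatR, Matrix.mulVec, dotProduct, Fin.sum_univ_two]

lemma bridge (lam : ℝ) : ∀ (w : List (Bool × ℤ)) (v : ℝ × ℝ),
    (↑(evalW (AmatR lam) (BmatR 2) w) : Matrix (Fin 2) (Fin 2) ℝ).mulVec ![v.1, v.2]
      = ![(ev2 lam w v).1, (ev2 lam w v).2] := by
  intro w
  induction w with
  | nil =>
    intro v
    show (↑(1 : Matrix.SpecialLinearGroup (Fin 2) ℝ) : Matrix (Fin 2) (Fin 2) ℝ).mulVec _ = _
    rw [Matrix.SpecialLinearGroup.coe_one, Matrix.one_mulVec]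
    rfl
  | cons p w ih =>
    intro v
    have he : evalW (AmatR lam) (BmatR 2) (p :: w)
        = (if p.1 then AmatR lam else BmatR 2) ^ p.2 * evalW (AmatR lam) (BmatR 2) w := by
      simp [evalW]
    rw [he, Matrix.SpecialLinearGroup.coe_mul, ← Matrix.mulVec_mulVec, ih]
    show _ = ![(appS lam p (ev2 lam w v)).1, (appS lam p (ev2 lam w v)).2]
    obtain ⟨b, n⟩ := p
    cases b
    · rw [if_neg (by simp)]
      rw [show ((BmatR 2) ^ n) = BmatR (n * 2) from BmatR_zpow 2 n, B_mulVec]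
      show _ = ![(appB n (ev2 lam w v)).1, (appB n (ev2 lam w v)).2]
      funext i
      fin_cases i <;> simp only [appB, Matrix.cons_val_zero, Matrix.cons_val_one, Matrix.head_cons] <;> ring
    · rw [if_pos rfl]
      rw [show ((AmatR lam) ^ n) = AmatR (n * lam) from AmatR_zpow lam n, A_mulVec]
      show _ = ![(appA lam n (ev2 lam w v)).1, (appA lam n (ev2 lam w v)).2]
      funext i
      fin_cases i <;> simp only [appA, Matrix.cons_val_zero, Matrix.cons_val_one, Matrix.head_cons] <;> ring

lemma ev2_fixed {lam : ℝ} {w : List (Bool × ℤ)} (h : evalW (AmatR lam) (BmatR 2) w = 1)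
    (v : ℝ × ℝ) : ev2 lam w v = v := by
  have hb := bridge lam w v
  rw [h, Matrix.SpecialLinearGroup.coe_one, Matrix.one_mulVec] at hb
  have h0 := congrFun hb 0
  have h1 := congrFun hb 1
  simp only [Matrix.cons_val_zero, Matrix.cons_val_one, Matrix.head_cons] at h0 h1
  exact Prod.ext h0.symm h1.symm

end S18


/-- there is `C > 0` such that for all real `1.8 ≤ λ < 2`, every nontrivial
relator of `G_{λ,2} = ⟨A_λ, B₂⟩ ≤ SL₂(ℝ)` admits an exact subword of the form
`(A_λ B₂⁻¹)^k` or `(A_λ⁻¹ B₂)^k` with `k ≥ C/√(2-λ)`; in particular every relator has at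
least `2C/√(2-λ)` syllables. -/
theorem stmt_18 :
    ∃ C : ℝ, 0 < C ∧ ∀ lam : ℝ, 1.8 ≤ lam → lam < 2 →
      ∀ w : List (Bool × ℤ), IsReducedWord w → w ≠ [] →
        evalW (AmatR lam) (BmatR 2) w = 1 →
        (∃ (k : ℕ) (u : List (Bool × ℤ)), C / Real.sqrt (2 - lam) ≤ (k : ℝ) ∧
          u <:+: w ∧
          (u = (List.replicate k ([(true, 1), (false, -1)] : List (Bool × ℤ))).flatten ∨
           u = (List.replicate k ([(true, -1), (false, 1)] : List (Bool × ℤ))).flatten)) ∧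
        2 * C / Real.sqrt (2 - lam) ≤ (w.length : ℝ) := by
  refine ⟨9/100, by norm_num, ?_⟩
  intro lam hlam1 hlam2 w hred hne heval
  have hlam1' : (9:ℝ)/5 ≤ lam := by norm_num at hlam1; linarith
  obtain ⟨e, he⟩ : ∃ e : ℝ, e = 2 - lam := ⟨_, rfl⟩
  rw [← he]
  have he0 : 0 < e := by rw [he]; linarith
  have he5 : e ≤ 1/5 := by rw [he]; linarith
  obtain ⟨r, hrdef⟩ : ∃ r : ℝ, r = min (3/20) (Real.sqrt e) := ⟨_, rfl⟩
  have hs0 : 0 < Real.sqrt e := Real.sqrt_pos.mpr he0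
  have hsqrt_e : Real.sqrt e * Real.sqrt e = e := Real.mul_self_sqrt he0.le
  have hr0 : 0 < r := hrdef ▸ lt_min (by norm_num) hs0
  have hr1 : r ≤ 3/20 := hrdef ▸ min_le_left _ _
  have hr2 : r^2 ≤ e := by
    have hrs : r ≤ Real.sqrt e := hrdef ▸ min_le_right _ _
    nlinarith
  have H : S18.Hyp lam e r := ⟨hlam1', by rw [he]; ring, he0, he5, hr0, hr1, hr2⟩
  have hCpos : (0:ℝ) < 9/100 / Real.sqrt e := by positivity
  obtain ⟨K, hKdef⟩ : ∃ K : ℕ, K = Nat.ceil ((9:ℝ)/100 / Real.sqrt e) := ⟨_, rfl⟩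
  have hKge : (9:ℝ)/100 / Real.sqrt e ≤ (K:ℝ) := hKdef ▸ Nat.le_ceil _
  have hKlt : (K:ℝ) < 9/100 / Real.sqrt e + 1 := hKdef ▸ Nat.ceil_lt_add_one hCpos.le
  have hdiv : e / Real.sqrt e = Real.sqrt e := by
    rw [div_eq_iff hs0.ne', hsqrt_e]
  have h7C : 7 * (9/100) * Real.sqrt e ≤ 2 * r := by
    rcases le_total (Real.sqrt e) (3/20) with hc | hc
    · rw [hrdef, min_eq_right hc]; nlinarith
    · rw [hrdef, min_eq_left hc]
      have h45 : Real.sqrt e ≤ 9/20 := by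
        rw [show (9:ℝ)/20 = Real.sqrt ((9/20)^2) by
          rw [Real.sqrt_sq (by norm_num)]]
        apply Real.sqrt_le_sqrt; nlinarith
      nlinarith
  have hjbound : ∀ j : ℕ, (j : ℝ) < (K:ℝ) → 7*e*(j:ℝ) ≤ 2*r := by
    intro j hj
    have hjC : (j:ℝ) ≤ 9/100 / Real.sqrt e := by
      rcases Nat.lt_or_ge j K with hlt | hge
      · have : (j:ℝ) + 1 ≤ (K:ℝ) := by exact_mod_cast hlt
        linarith
      · exfalso; have : (K:ℝ) ≤ (j:ℝ) := by exact_mod_cast hge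
        linarith
    have : 7*e*(j:ℝ) ≤ 7*e*(9/100 / Real.sqrt e) := by nlinarith
    have heq : 7*e*(9/100 / Real.sqrt e) = 7*(9/100)*(e / Real.sqrt e) := by ring
    rw [heq, hdiv] at this
    linarith
  by_cases hpat : (S18.patP K <:+: w ∨ S18.patN K <:+: w)
  · have hKlen : 2*K ≤ w.length := by
      obtain hp | hp := hpat
      · have := hp.length_le; rwa [S18.patP_length] at this
      · have := hp.length_le; rwa [S18.patN_length] at this
    constructor
    · obtain hp | hp := hpat
      · exact ⟨K, S18.patP K, hKge, hp, Or.inl rfl⟩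
      · exact ⟨K, S18.patN K, hKge, hp, Or.inr rfl⟩
    · have h2K : ((2*K : ℕ):ℝ) ≤ (w.length : ℝ) := by exact_mod_cast hKlen
      push_cast at h2K
      rw [div_le_iff₀ hs0] at hKge ⊢
      nlinarith
  · exfalso
    push_neg at hpat
    obtain ⟨hpP, hpN⟩ := hpat
    obtain ⟨p, w'⟩ := List.exists_cons_of_ne_nil hne
    obtain ⟨w', rfl⟩ := w'
    have hcap : ∀ (q : Bool × ℤ) (t : List (Bool × ℤ)) (j : ℕ), (q :: t) <:+ (p :: w') →
        (S18.stF q t = .e2N j ∨ S18.stF q t = .e2P j) → 7*e*(j:ℝ) ≤ 2*r := by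
      intro q t j hsuf hst
      have hch : (q :: t).Chain' (fun a b => a.1 ≠ b.1) := hred.1.suffix hsuf
      have hjK : (j:ℝ) < (K:ℝ) := by
        by_contra hge
        push_neg at hge
        have hjKn : K ≤ j := by exact_mod_cast hge
        obtain hst | hst := hst
        · have hpre := (S18.stF_pat t q hch).2.1 j hst
          exact hpN (((S18.patN_mono hjKn).trans hpre).isInfix.trans hsuf.isInfix)
        · have hpre := (S18.stF_pat t q hch).2.2.2 j hst
          exact hpP (((S18.patP_mono hjKn).trans hpre).isInfix.trans hsuf.isInfix)
      exact hjbound j hjK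
    have hinv := S18.INV H w' p hred hcap
    have hfix := S18.ev2_fixed heval (S18.v0 (S18.lastSyl p w').1)
    rw [hfix] at hinv
    exact S18.v0_notin H _ _ hinv
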